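/- Let ρ = l → r be a linear term rewrite rule and s a linear term. If the rule encoding ρ° is applied at position p in the term encoding s° (i.e., the match morphism m : l° ↣ s° maps the root of l° to the vertex at position p of s° and establishes a match), then there exists a unique morphism α : s° → C[l°↓_X] such that α∘m = t_L and the square with sides m, 1_{l°}, α, t_L is a pullback. -/

import Mathlib

open CategoryTheory
open Classical

noncomputable section

/-- Labeled graphs over a label type `W`. -/
structure LGraph (W : Type) : Type 1 where
  V : Type
  E : Type
  src : E → V
  tgt : E → V
  lV : V → W
  lE : E → W

section Cat

variable {W : Type} [Preorder W]

/-- Label-nondecreasing graph premorphisms: the morphisms of the category `Graph^(L,≤)`. -/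
structure GLHom (G H : LGraph W) : Type where
  onV : G.V → H.V
  onE : G.E → H.E
  src_comm : ∀ e, H.src (onE e) = onV (G.src e)
  tgt_comm : ∀ e, H.tgt (onE e) = onV (G.tgt e)
  lV_le : ∀ v, G.lV v ≤ H.lV (onV v)
  lE_le : ∀ e, G.lE e ≤ H.lE (onE e)

theorem GLHom.ext' {G H : LGraph W} {f g : GLHom G H}
    (h1 : f.onV = g.onV) (h2 : f.onE = g.onE) : f = g := by
  cases f; cases g
  cases h1; cases h2
  rfl

/-- The category `Graph^(L,≤)` of labeled graphs over a preordered label set. -/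
instance : Category (LGraph W) where
  Hom G H := GLHom G H
  id G := { onV := id, onE := id, src_comm := fun _ => rfl, tgt_comm := fun _ => rfl,
            lV_le := fun _ => le_refl _, lE_le := fun _ => le_refl _ }
  comp f g :=
    { onV := g.onV ∘ f.onV
      onE := g.onE ∘ f.onE
      src_comm := fun e => by
        simp only [Function.comp_apply, g.src_comm, f.src_comm]
      tgt_comm := fun e => by
        simp only [Function.comp_apply, g.tgt_comm, f.tgt_comm]
      lV_le := fun v => le_trans (f.lV_le v) (g.lV_le _)
      lE_le := fun e => le_trans (f.lE_le e) (g.lE_le _) }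
  id_comp f := GLHom.ext' rfl rfl
  comp_id f := GLHom.ext' rfl rfl
  assoc f g h := GLHom.ext' rfl rfl

/-- Vertex map of a morphism. -/
abbrev homV {G H : LGraph W} (f : G ⟶ H) : G.V → H.V := GLHom.onV f

/-- Edge map of a morphism. -/
abbrev homE {G H : LGraph W} (f : G ⟶ H) : G.E → H.E := GLHom.onE f

end Cat

/-- A graph is finite if it has finitely many vertices and edges. -/
def FiniteG {W : Type} (G : LGraph W) : Prop := Finite G.V ∧ Finite G.E
/-- The flat lattice on a base label set `A`: a global minimum `⊥`, a global
maximum `⊤`, and all elements of `A` pairwise incomparable. -/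
inductive Flat (A : Type) : Type
  | bot : Flat A
  | el : A → Flat A
  | top : Flat A

namespace Flat

def le {A : Type} : Flat A → Flat A → Prop
  | bot, _ => True
  | _, top => True
  | el a, el b => a = b
  | _, _ => False

instance (A : Type) : Preorder (Flat A) where
  le := Flat.le
  le_refl a := by cases a <;> trivial
  le_trans a b c hab hbc := by
    cases a <;> cases b <;> cases c <;> simp_all [Flat.le]

theorem bot_le {A : Type} (a : Flat A) : (Flat.bot : Flat A) ≤ a := by
  show Flat.le Flat.bot a
  cases a <;> trivial

theorem le_top {A : Type} (a : Flat A) : a ≤ (Flat.top : Flat A) := by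
  show Flat.le a Flat.top
  cases a <;> trivial

theorem le_cases {A : Type} {a b : Flat A} (h : a = Flat.bot ∨ b = Flat.top) : a ≤ b := by
  rcases h with h | h
  · subst h; exact bot_le _
  · subst h; exact le_top _

end Flat

/-- The flat lattice `Σ°` induced by a signature `S` together with the
positive natural numbers (used as edge labels). -/
abbrev FlatL (S : Type) := Flat (S ⊕ ℕ+)
/-- First-order terms over a signature `S` with arity function `ar` and
variable set `X`. -/
inductive Term (S : Type) (ar : S → ℕ) (X : Type) : Type
  | var : X → Term S ar X
  | app : (f : S) → (Fin (ar f) → Term S ar X) → Term S ar X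

namespace Term

variable {S : Type} {ar : S → ℕ} {X : Type}

/-- The subterm of `t` at a position (a list of (0-based) child indices),
if the position exists in `t`. -/
def sub? : Term S ar X → List ℕ → Option (Term S ar X)
  | t, [] => some t
  | .var _, _ :: _ => none
  | .app f ts, i :: p => if h : i < ar f then sub? (ts ⟨i, h⟩) p else none

/-- The set of variables occurring in a term. -/
def vars (t : Term S ar X) : Set X := {x | ∃ p, t.sub? p = some (.var x)}

/-- A term is linear if every variable occurs at most once in it. -/
def Linear (t : Term S ar X) : Prop :=
  ∀ x p q, t.sub? p = some (.var x) → t.sub? q = some (.var x) → p = q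

/-- The head symbol of a term, if any. -/
def head? : Term S ar X → Option S
  | .var _ => none
  | .app f _ => some f

/-- The function symbol at position `p` of `t`, if any. -/
def symAt (t : Term S ar X) (p : List ℕ) : Option S := (t.sub? p).bind head?

theorem sub?_append (t : Term S ar X) (p q : List ℕ) :
    t.sub? (p ++ q) = (t.sub? p).bind (fun s => s.sub? q) := by
  induction p generalizing t with
  | nil => simp [sub?]
  | cons i p ih =>
    cases t with
    | var x => simp [sub?]
    | app f ts =>
      show sub? (.app f ts) (i :: (p ++ q)) = _
      simp only [sub?]
      by_cases h : i < ar f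
      · simp [h, ih]
      · simp [h]

theorem symAt_sub (t : Term S ar X) {p : List ℕ} {f : S} (h : t.symAt p = some f) :
    ∃ ts : Fin (ar f) → Term S ar X, t.sub? p = some (.app f ts) := by
  unfold symAt at h
  cases hs : t.sub? p with
  | none => rw [hs] at h; simp at h
  | some s =>
    rw [hs] at h
    cases s with
    | var x => simp [head?] at h
    | app g ts =>
      simp [head?] at h
      subst h
      exact ⟨ts, rfl⟩

theorem edge_sub?_isSome (t : Term S ar X) {p : List ℕ} {i : ℕ}
    (h : ∃ f, t.symAt p = some f ∧ i < ar f) :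
    ∃ s, t.sub? (p ++ [i]) = some s := by
  obtain ⟨f, hf, hi⟩ := h
  obtain ⟨ts, hts⟩ := t.symAt_sub hf
  refine ⟨ts ⟨i, hi⟩, ?_⟩
  rw [sub?_append, hts]
  simp [sub?, hi]

theorem edge_tgt_var (t : Term S ar X) {p : List ℕ} {i : ℕ}
    (h : ∃ f, t.symAt p = some f ∧ i < ar f)
    (hn : ¬ (t.symAt (p ++ [i])).isSome) :
    ∃ x, t.sub? (p ++ [i]) = some (.var x) := by
  obtain ⟨s, hs⟩ := t.edge_sub?_isSome h
  cases s with
  | var x => exact ⟨x, hs⟩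
  | app g ts => exact absurd (by simp [symAt, hs, head?]) hn

theorem root_var (t : Term S ar X) (h : ¬ (t.symAt []).isSome) :
    ∃ x, t.sub? [] = some (.var x) := by
  cases t with
  | var x => exact ⟨x, rfl⟩
  | app f ts => exact absurd (by simp [symAt, sub?, head?]) h

/-- Vertices of the term encoding: symbol vertices (named by their position)
and variable heads (named by their variable). -/
def encV (t : Term S ar X) : Type :=
  {p : List ℕ // (t.symAt p).isSome} ⊕ {x : X // x ∈ t.vars}

/-- Edges of the term encoding: pairs of a symbol position and a child index. -/
def encE (t : Term S ar X) : Type :=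
  {pi : List ℕ × ℕ // ∃ f, t.symAt pi.1 = some f ∧ pi.2 < ar f}

/-- Target of an edge of the term encoding. -/
noncomputable def encTgt (t : Term S ar X) (e : t.encE) : t.encV :=
  if h : (t.symAt (e.1.1 ++ [e.1.2])).isSome then Sum.inl ⟨e.1.1 ++ [e.1.2], h⟩
  else Sum.inr ⟨Classical.choose (t.edge_tgt_var e.2 h),
    ⟨e.1.1 ++ [e.1.2], Classical.choose_spec (t.edge_tgt_var e.2 h)⟩⟩

/-- The term encoding `t°` of a term `t` as a `Σ°`-labeled graph. -/
noncomputable def enc (t : Term S ar X) : LGraph (FlatL S) where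
  V := t.encV
  E := t.encE
  src e := Sum.inl ⟨e.1.1, by obtain ⟨f, hf, _⟩ := e.2; simp [hf]⟩
  tgt := t.encTgt
  lV v := match v with
    | .inl q => (t.symAt q.1).elim Flat.bot (fun f => Flat.el (Sum.inl f))
    | .inr _ => Flat.bot
  lE e := Flat.el (Sum.inr ⟨e.1.2 + 1, Nat.succ_pos _⟩)

/-- The root of the term encoding (the vertex at position `ε`). -/
noncomputable def encRoot (t : Term S ar X) : t.encV :=
  if h : (t.symAt []).isSome then Sum.inl ⟨[], h⟩
  else Sum.inr ⟨Classical.choose (t.root_var h), ⟨[], Classical.choose_spec (t.root_var h)⟩⟩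

/-- `t.encVertAt p v` says that `v` is the vertex at position `p` in the term
encoding `t°`. -/
def encVertAt (t : Term S ar X) (p : List ℕ) : t.encV → Prop
  | .inl q => q.1 = p
  | .inr x => t.sub? p = some (.var x.1)

/-- The set of variable heads of a term encoding. -/
def varHeads (t : Term S ar X) : Set t.encV := Set.range Sum.inr

/-- Applying a substitution to a term. -/
def subst (σ : X → Term S ar X) : Term S ar X → Term S ar X
  | .var x => σ x
  | .app f ts => .app f (fun i => subst σ (ts i))

end Term

/-- One-hole contexts over a signature. `app f i ts C` is the context
`f(ts 0, …, C, …, ts (n-1))` with `C` at argument position `i`. -/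
inductive Ctx (S : Type) (ar : S → ℕ) (X : Type) : Type
  | hole : Ctx S ar X
  | app : (f : S) → (i : Fin (ar f)) → (Fin (ar f) → Term S ar X) → Ctx S ar X → Ctx S ar X

namespace Ctx

variable {S : Type} {ar : S → ℕ} {X : Type}

/-- Replacing the hole of a context by a term. -/
def fill : Ctx S ar X → Term S ar X → Term S ar X
  | .hole, t => t
  | .app f i ts C, t => .app f (Function.update ts i (C.fill t))

/-- The position of the hole of a context. -/
def holePos : Ctx S ar X → List ℕ
  | .hole => []
  | .app _ i _ C => (i : ℕ) :: C.holePos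

end Ctx

/-- A term rewrite rule `lhs → rhs`: `lhs` is not a variable and all variables
of `rhs` occur in `lhs`. -/
structure TRSRule (S : Type) (ar : S → ℕ) (X : Type) : Type where
  lhs : Term S ar X
  rhs : Term S ar X
  lhs_not_var : ∀ x, lhs ≠ Term.var x
  var_cond : rhs.vars ⊆ lhs.vars

namespace TRSRule

variable {S : Type} {ar : S → ℕ} {X : Type}

/-- A rule is linear if both sides are linear terms. -/
def Linear (ρ : TRSRule S ar X) : Prop := ρ.lhs.Linear ∧ ρ.rhs.Linear

/-- The rewrite step relation generated by a single rule. -/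
def Step (ρ : TRSRule S ar X) (s t : Term S ar X) : Prop :=
  ∃ (C : Ctx S ar X) (σ : X → Term S ar X),
    s = C.fill (ρ.lhs.subst σ) ∧ t = C.fill (ρ.rhs.subst σ)

/-- The rewrite step relation of a rule at a fixed position `p`. -/
def StepAt (ρ : TRSRule S ar X) (p : List ℕ) (s t : Term S ar X) : Prop :=
  ∃ (C : Ctx S ar X) (σ : X → Term S ar X),
    C.holePos = p ∧ s = C.fill (ρ.lhs.subst σ) ∧ t = C.fill (ρ.rhs.subst σ)

end TRSRule

/-- The rewrite relation of a term rewriting system. -/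
def TStep {S : Type} {ar : S → ℕ} {X : Type} (Rs : Set (TRSRule S ar X))
    (s t : Term S ar X) : Prop :=
  ∃ ρ ∈ Rs, ρ.Step s t
section Closures

variable {A : Type}

/-- Upper context closure `C[G]` of a graph rooted at `r`: adds a `⊤`-labeled
context vertex with a `⊤`-labeled edge to the root and a `⊤`-labeled loop. -/
def upperCC (G : LGraph (Flat A)) (r : G.V) : LGraph (Flat A) where
  V := G.V ⊕ Unit
  E := G.E ⊕ Bool
  src e := match e with
    | .inl e => .inl (G.src e)
    | .inr _ => .inr ()
  tgt e := match e with
    | .inl e => .inl (G.tgt e)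
    | .inr true => .inl r
    | .inr false => .inr ()
  lV v := match v with
    | .inl v => G.lV v
    | .inr _ => Flat.top
  lE e := match e with
    | .inl e => G.lE e
    | .inr _ => Flat.top

/-- Lower context closure `G↓_Xs`: relabels every vertex in `Xs` to `⊤` and
adds for it a fresh `⊤`-labeled vertex `x'` with a `⊤`-labeled edge `x → x'`
and a `⊤`-labeled loop on `x'`. -/
noncomputable def lowerCC (G : LGraph (Flat A)) (Xs : Set G.V) : LGraph (Flat A) where
  V := G.V ⊕ Xs
  E := G.E ⊕ (Xs ⊕ Xs)
  src e := match e with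
    | .inl e => .inl (G.src e)
    | .inr (.inl x) => .inl x.1
    | .inr (.inr x) => .inr x
  tgt e := match e with
    | .inl e => .inl (G.tgt e)
    | .inr (.inl x) => .inr x
    | .inr (.inr x) => .inr x
  lV v := match v with
    | .inl v => if v ∈ Xs then Flat.top else G.lV v
    | .inr _ => Flat.top
  lE e := match e with
    | .inl e => G.lE e
    | .inr _ => Flat.top

/-- The context closure `C[G↓_Xs]` of a rooted graph. -/
noncomputable def ctxCC (G : LGraph (Flat A)) (r : G.V) (Xs : Set G.V) : LGraph (Flat A) :=
  upperCC (lowerCC G Xs) (Sum.inl r)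

theorem ctxCC_lV_inl (G : LGraph (Flat A)) (r : G.V) (Xs : Set G.V) (v : G.V) :
    (ctxCC G r Xs).lV (Sum.inl (Sum.inl v)) = if v ∈ Xs then Flat.top else G.lV v := rfl

/-- The typing morphism `G ↣ C[G↓_Xs]` (an inclusion). -/
noncomputable def tCC (G : LGraph (Flat A)) (r : G.V) (Xs : Set G.V) :
    GLHom G (ctxCC G r Xs) where
  onV v := Sum.inl (Sum.inl v)
  onE e := Sum.inl (Sum.inl e)
  src_comm e := rfl
  tgt_comm e := rfl
  lV_le v := by
    rw [ctxCC_lV_inl]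
    split
    · exact Flat.le_top _
    · exact le_refl _
  lE_le e := le_refl _

end Closures

/-- The interface graph `I(t)` of a term `t`: a discrete graph with
`⊥`-labeled vertices `Var(t) ∪ {ε}`. -/
def interfaceG {S : Type} {ar : S → ℕ} {X : Type} (t : Term S ar X) : LGraph (FlatL S) where
  V := {x : X // x ∈ t.vars} ⊕ Unit
  E := Empty
  src e := e.elim
  tgt e := e.elim
  lV _ := Flat.bot
  lE e := e.elim

/-- The variable vertices of an interface graph. -/
def interfaceVars {S : Type} {ar : S → ℕ} {X : Type} (t : Term S ar X) :
    Set (interfaceG t).V := Set.range Sum.inl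
/-- A PBPO⁺ rewrite rule. -/
structure PBPORule (W : Type) [Preorder W] : Type 1 where
  L : LGraph W
  K : LGraph W
  R : LGraph W
  L' : LGraph W
  K' : LGraph W
  l : K ⟶ L
  r : K ⟶ R
  l' : K' ⟶ L'
  tL : L ⟶ L'
  tK : K ⟶ K'

/-- A PBPO⁺ rewrite step `G_L ⇒_ρ^α G_R`, consisting of a monic match `m`, an
adherence morphism `α` making the match square a pullback, the pullback `G_K`
of `α` along `l'`, and the pushout `G_R` of `r` along `u`. -/
structure RewriteStep {W : Type} [Preorder W] (ρ : PBPORule W) (G₀ G₁ : LGraph W) :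
    Type 1 where
  m : ρ.L ⟶ G₀
  mono_m : Mono m
  α : G₀ ⟶ ρ.L'
  matchPB : IsPullback (𝟙 ρ.L) m ρ.tL α
  GK : LGraph W
  gL : GK ⟶ G₀
  u' : GK ⟶ ρ.K'
  pbK : IsPullback gL u' α ρ.l'
  u : ρ.K ⟶ GK
  u_u' : u ≫ u' = ρ.tK
  u_gL : u ≫ gL = ρ.l ≫ m
  w : ρ.R ⟶ G₁
  gR : GK ⟶ G₁
  po : IsPushout ρ.r u w gR

/-- `G ⇒_ρ H` : there exists a PBPO⁺ rewrite step from `G` to `H` via `ρ`. -/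
def PBPOStep {W : Type} [Preorder W] (ρ : PBPORule W) (G H : LGraph W) : Prop :=
  Nonempty (RewriteStep ρ G H)

/-- A match `m` establishes a match (of the rule `ρ`) if it is monic and some
adherence morphism makes the match square a pullback. -/
def EstablishesMatch {W : Type} [Preorder W] (ρ : PBPORule W) {G : LGraph W}
    (m : ρ.L ⟶ G) : Prop :=
  Mono m ∧ ∃ α : G ⟶ ρ.L', m ≫ α = ρ.tL ∧ IsPullback (𝟙 ρ.L) m ρ.tL α

section RuleEnc

variable {S : Type} {ar : S → ℕ} {X : Type}

/-- The morphism `l : K → L` of the rule encoding. -/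
noncomputable def encKtoL (ρ : TRSRule S ar X) : GLHom (interfaceG ρ.rhs) ρ.lhs.enc where
  onV v := match v with
    | .inl x => Sum.inr ⟨x.1, ρ.var_cond x.2⟩
    | .inr _ => ρ.lhs.encRoot
  onE e := e.elim
  src_comm e := e.elim
  tgt_comm e := e.elim
  lV_le v := by cases v <;> exact Flat.bot_le _
  lE_le e := e.elim

/-- The morphism `r : K → R` of the rule encoding. -/
noncomputable def encKtoR (ρ : TRSRule S ar X) : GLHom (interfaceG ρ.rhs) ρ.rhs.enc where
  onV v := match v with
    | .inl x => Sum.inr x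
    | .inr _ => ρ.rhs.encRoot
  onE e := e.elim
  src_comm e := e.elim
  tgt_comm e := e.elim
  lV_le v := by cases v <;> exact Flat.bot_le _
  lE_le e := e.elim

/-- Mapping the primed (lower-closure) vertices of `K'` to those of `L'`. -/
noncomputable def mapPrime (ρ : TRSRule S ar X) :
    ↥(interfaceVars ρ.rhs) → ↥(ρ.lhs.varHeads) :=
  fun x' => match x' with
  | ⟨.inl x, _⟩ => ⟨Sum.inr ⟨x.1, ρ.var_cond x.2⟩, ⟨⟨x.1, ρ.var_cond x.2⟩, rfl⟩⟩
  | ⟨.inr u, h⟩ => absurd h (by rintro ⟨y, hy⟩; exact Sum.inl_ne_inr hy)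

/-- The morphism `l' : K' → L'` of the rule encoding. -/
noncomputable def encl' (ρ : TRSRule S ar X) :
    GLHom (ctxCC (interfaceG ρ.rhs) (Sum.inr ()) (interfaceVars ρ.rhs))
      (ctxCC ρ.lhs.enc ρ.lhs.encRoot ρ.lhs.varHeads) where
  onV v := match v with
    | .inl (.inl (.inl x)) => .inl (.inl (Sum.inr ⟨x.1, ρ.var_cond x.2⟩))
    | .inl (.inl (.inr _)) => .inl (.inl ρ.lhs.encRoot)
    | .inl (.inr x') => .inl (.inr (mapPrime ρ x'))
    | .inr u => .inr u
  onE e := match e with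
    | .inl (.inl e) => e.elim
    | .inl (.inr (.inl x')) => .inl (.inr (.inl (mapPrime ρ x')))
    | .inl (.inr (.inr x')) => .inl (.inr (.inr (mapPrime ρ x')))
    | .inr b => .inr b
  src_comm := by
    rintro ((e | (⟨(x | u), hv⟩ | ⟨(x | u), hv⟩)) | b)
    · exact e.elim
    · rfl
    · exact absurd hv (by rintro ⟨y, hy⟩; exact Sum.inl_ne_inr hy)
    · rfl
    · exact absurd hv (by rintro ⟨y, hy⟩; exact Sum.inl_ne_inr hy)
    · rfl
  tgt_comm := by
    rintro ((e | (x' | x')) | b)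
    · exact e.elim
    · rfl
    · rfl
    · cases b <;> rfl
  lV_le := by
    rintro (((x | u) | x') | c)
    · refine Flat.le_cases (Or.inr ?_)
      refine (ctxCC_lV_inl ρ.lhs.enc ρ.lhs.encRoot ρ.lhs.varHeads
        (Sum.inr ⟨x.1, ρ.var_cond x.2⟩)).trans ?_
      exact if_pos ⟨⟨x.1, ρ.var_cond x.2⟩, rfl⟩
    · refine Flat.le_cases (Or.inl ?_)
      refine (ctxCC_lV_inl (interfaceG ρ.rhs) (Sum.inr ()) (interfaceVars ρ.rhs)
        (Sum.inr u)).trans ?_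
      exact (if_neg (by rintro ⟨y, hy⟩; exact Sum.inl_ne_inr hy)).trans rfl
    · exact Flat.le_cases (Or.inr rfl)
    · exact Flat.le_cases (Or.inr rfl)
  lE_le := by
    rintro ((e | (x' | x')) | b)
    · exact e.elim
    · exact Flat.le_cases (Or.inr rfl)
    · exact Flat.le_cases (Or.inr rfl)
    · exact Flat.le_cases (Or.inr rfl)

/-- The rule encoding `ρ°` of a term rewrite rule `ρ : l → r` as a PBPO⁺ rule. -/
noncomputable def ruleEnc (ρ : TRSRule S ar X) : PBPORule (FlatL S) where
  L := ρ.lhs.enc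
  K := interfaceG ρ.rhs
  R := ρ.rhs.enc
  L' := ctxCC ρ.lhs.enc ρ.lhs.encRoot ρ.lhs.varHeads
  K' := ctxCC (interfaceG ρ.rhs) (Sum.inr ()) (interfaceVars ρ.rhs)
  l := encKtoL ρ
  r := encKtoR ρ
  l' := encl' ρ
  tL := tCC ρ.lhs.enc ρ.lhs.encRoot ρ.lhs.varHeads
  tK := tCC (interfaceG ρ.rhs) (Sum.inr ()) (interfaceVars ρ.rhs)

/-- The rewrite relation of an encoded term rewriting system `R°`. -/
def SysStep (Rs : Set (TRSRule S ar X)) (G H : LGraph (FlatL S)) : Prop :=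
  ∃ ρ ∈ Rs, PBPOStep (ruleEnc ρ) G H

end RuleEnc
section Cycles

variable {W : Type}

/-- `IsUPath G u es v`: `es` is an undirected path from `u` to `v` in `G`. -/
def IsUPath (G : LGraph W) : G.V → List G.E → G.V → Prop
  | u, [], v => u = v
  | u, e :: es, v =>
      (G.src e = u ∧ IsUPath G (G.tgt e) es v) ∨ (G.tgt e = u ∧ IsUPath G (G.src e) es v)

/-- An undirected cycle at `v`: a nonempty undirected path from `v` to `v`
with pairwise distinct edges. -/
def IsUCycle (G : LGraph W) (v : G.V) (es : List G.E) : Prop :=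
  es ≠ [] ∧ es.Nodup ∧ IsUPath G v es v

/-- A cycle edge is an edge lying on some undirected cycle. -/
def CycleEdge (G : LGraph W) (e : G.E) : Prop :=
  ∃ v es, IsUCycle G v es ∧ e ∈ es

/-- A graph is cycle-free if it contains no undirected cycle. -/
def CycleFree (G : LGraph W) : Prop := ¬ ∃ v es, IsUCycle G v es

/-- `[G]`: the graph obtained from `G` by deleting all cycle edges. -/
def dropCycles (G : LGraph W) : LGraph W where
  V := G.V
  E := {e : G.E // ¬ CycleEdge G e}
  src e := G.src e.1
  tgt e := G.tgt e.1
  lV := G.lV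
  lE e := G.lE e.1

end Cycles

section Zones

variable {S : Type}

/-- A vertex is in-well-formed if it has at most one incoming edge. -/
def InWF (G : LGraph (FlatL S)) (v : G.V) : Prop :=
  ∀ e e' : G.E, G.tgt e = v → G.tgt e' = v → e = e'

/-- A vertex is out-well-formed if its label is a function symbol `f` and it
has exactly `ar f` outgoing edges, labeled `1, …, ar f`. -/
def OutWF (G : LGraph (FlatL S)) (ar : S → ℕ) (v : G.V) : Prop :=
  ∃ f : S, G.lV v = Flat.el (Sum.inl f) ∧
    ∃ φ : Fin (ar f) ≃ {e : G.E // G.src e = v},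
      ∀ i, G.lE (φ i).1 = Flat.el (Sum.inr ⟨(i : ℕ) + 1, Nat.succ_pos _⟩)

/-- A vertex is good if it is out-well-formed and all its children are
in-well-formed; otherwise it is bad. -/
def Good (G : LGraph (FlatL S)) (ar : S → ℕ) (v : G.V) : Prop :=
  OutWF G ar v ∧ ∀ e : G.E, G.src e = v → InWF G (G.tgt e)

/-- The edges included in a zone by the zoning algorithm are exactly the edges
with a good source. -/
def ZoneEdge (G : LGraph (FlatL S)) (ar : S → ℕ) (e : G.E) : Prop :=
  Good G ar (G.src e)

/-- One directed step along an edge included in a zone. -/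
def ZStep (G : LGraph (FlatL S)) (ar : S → ℕ) (u v : G.V) : Prop :=
  ∃ e, ZoneEdge G ar e ∧ G.src e = u ∧ G.tgt e = v

/-- Two vertices lie in the same zone iff they are connected by edges included
in zones (equivalence closure of `ZStep`). -/
def SameZone (G : LGraph (FlatL S)) (ar : S → ℕ) : G.V → G.V → Prop :=
  Relation.EqvGen (ZStep G ar)

/-- A root of a zone: a vertex with no parent inside its zone. -/
def IsZoneRoot (G : LGraph (FlatL S)) (ar : S → ℕ) (r : G.V) : Prop :=
  ¬ ∃ e, ZoneEdge G ar e ∧ G.tgt e = r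

/-- A directed path along zone edges. -/
def IsZPath (G : LGraph (FlatL S)) (ar : S → ℕ) : G.V → List G.E → G.V → Prop
  | u, [], v => u = v
  | u, e :: es, v => ZoneEdge G ar e ∧ G.src e = u ∧ IsZPath G ar (G.tgt e) es v

/-- The zone of `v₀`, as a subgraph of `G`, with every bad vertex relabeled
with `⊥`. -/
noncomputable def zoneTermGraph (G : LGraph (FlatL S)) (ar : S → ℕ) (v₀ : G.V) :
    LGraph (FlatL S) where
  V := {u : G.V // SameZone G ar u v₀}
  E := {e : G.E // ZoneEdge G ar e ∧ SameZone G ar (G.src e) v₀}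
  src e := ⟨G.src e.1, e.2.2⟩
  tgt e := ⟨G.tgt e.1,
    Relation.EqvGen.trans _ _ _
      (Relation.EqvGen.symm _ _ (Relation.EqvGen.rel _ _ ⟨e.1, e.2.1, rfl, rfl⟩)) e.2.2⟩
  lV u := if Good G ar u.1 then G.lV u.1 else Flat.bot
  lE e := G.lE e.1

end Zones

section Relabel

variable {W : Type}

/-- `G` with the label of vertex `v` changed to `l`. -/
noncomputable def relabelV (G : LGraph W) (v : G.V) (l : W) : LGraph W :=
  { G with lV := Function.update G.lV v l }

/-- `G` with the label of every vertex in `s` changed to `l`. -/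
noncomputable def relabelSet (G : LGraph W) (s : Set G.V) (l : W) : LGraph W :=
  { G with lV := fun u => if u ∈ s then l else G.lV u }

end Relabel

section Aux

variable {S : Type} {ar : S → ℕ} {X : Type}

namespace Term

theorem symAt_isSome_sub {t : Term S ar X} {q : List ℕ} (h : (t.symAt q).isSome) :
    (t.sub? q).isSome := by
  unfold Term.symAt at h
  cases hs : t.sub? q with
  | none => rw [hs] at h; simp at h
  | some u => simp

theorem sub?_prefix {t : Term S ar X} {q r : List ℕ} (h : (t.sub? (q ++ r)).isSome) :
    (t.sub? q).isSome := by
  rw [Term.sub?_append] at h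
  cases hs : t.sub? q with
  | none => rw [hs] at h; simp at h
  | some u => simp

theorem child_ex {t : Term S ar X} {q : List ℕ} {i : ℕ}
    (h : (t.sub? (q ++ [i])).isSome) : ∃ f, t.symAt q = some f ∧ i < ar f := by
  rw [Term.sub?_append] at h
  cases hs : t.sub? q with
  | none => rw [hs] at h; simp at h
  | some u =>
    rw [hs, Option.bind_some] at h
    cases u with
    | var x =>
      rw [show (Term.var x : Term S ar X).sub? [i] = none from rfl] at h
      simp at h
    | app f ts =>
      refine ⟨f, by simp [Term.symAt, hs, Term.head?], ?_⟩
      by_contra hi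
      rw [show (Term.app f ts : Term S ar X).sub? [i] = none from by
        simp [Term.sub?, hi]] at h
      simp at h

theorem proper_prefix_sym {t : Term S ar X} {pp q : List ℕ} {j : ℕ} {rest : List ℕ}
    (hp : (t.sub? pp).isSome) (hq : q ++ j :: rest = pp) :
    ∃ f, t.symAt q = some f ∧ j < ar f := by
  have h2 : (q ++ [j]) ++ rest = pp := by simpa using hq
  rw [← h2] at hp
  exact child_ex (sub?_prefix hp)

/-- The position of a vertex of a term encoding. -/
noncomputable def posOf (t : Term S ar X) : t.encV → List ℕ
  | .inl q => q.1
  | .inr x => Classical.choose (x.2 : ∃ p, t.sub? p = some (.var x.1))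

theorem encVertAt_posOf (t : Term S ar X) (v : t.encV) : t.encVertAt (t.posOf v) v := by
  cases v with
  | inl q => exact rfl
  | inr x => exact Classical.choose_spec (x.2 : ∃ p, t.sub? p = some (.var x.1))

theorem vertAt_unique {t : Term S ar X} {q : List ℕ} {v v' : t.encV}
    (h1 : t.encVertAt q v) (h2 : t.encVertAt q v') : v = v' := by
  cases v with
  | inl a =>
    cases v' with
    | inl b =>
      have ha : a.1 = q := h1
      have hb : b.1 = q := h2
      exact congrArg Sum.inl (Subtype.ext (ha.trans hb.symm))
    | inr b =>
      exfalso
      have ha : a.1 = q := h1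
      have hb : t.sub? q = some (.var b.1) := h2
      have := a.2
      rw [ha] at this
      unfold Term.symAt at this
      rw [hb] at this
      simp [Term.head?] at this
  | inr a =>
    cases v' with
    | inl b =>
      exfalso
      have hb : b.1 = q := h2
      have ha : t.sub? q = some (.var a.1) := h1
      have := b.2
      rw [hb] at this
      unfold Term.symAt at this
      rw [ha] at this
      simp [Term.head?] at this
    | inr b =>
      have ha : t.sub? q = some (.var a.1) := h1
      have hb : t.sub? q = some (.var b.1) := h2
      rw [ha] at hb
      injection hb with hb
      injection hb with hb
      exact congrArg Sum.inr (Subtype.ext hb)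

theorem encVertAt_tgt (t : Term S ar X) (e : t.encE) :
    t.encVertAt (e.1.1 ++ [e.1.2]) (t.encTgt e) := by
  by_cases h : (t.symAt (e.1.1 ++ [e.1.2])).isSome
  · rw [show t.encTgt e = Sum.inl ⟨_, h⟩ from dif_pos h]
    exact rfl
  · rw [show t.encTgt e = Sum.inr ⟨Classical.choose (t.edge_tgt_var e.2 h),
      ⟨e.1.1 ++ [e.1.2], Classical.choose_spec (t.edge_tgt_var e.2 h)⟩⟩ from dif_neg h]
    exact Classical.choose_spec (t.edge_tgt_var e.2 h)

theorem vertAt_sub {t : Term S ar X} {q : List ℕ} {v : t.encV}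
    (h : t.encVertAt q v) : (t.sub? q).isSome := by
  cases v with
  | inl a =>
    have ha : a.1 = q := h
    exact ha ▸ symAt_isSome_sub a.2
  | inr x =>
    have hx : t.sub? q = some (.var x.1) := h
    rw [hx]; rfl

end Term

theorem TRSRule.symAt_nil_isSome (ρ : TRSRule S ar X) : (ρ.lhs.symAt []).isSome := by
  cases hl : ρ.lhs with
  | var x => exact absurd hl (ρ.lhs_not_var x)
  | app f ts => simp [Term.symAt, Term.sub?, Term.head?]

theorem TRSRule.encRoot_eq (ρ : TRSRule S ar X) :
    ρ.lhs.encRoot = Sum.inl ⟨[], ρ.symAt_nil_isSome⟩ := by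
  unfold Term.encRoot
  exact dif_pos ρ.symAt_nil_isSome

theorem Flat.not_el_le_bot {A : Type} {a : A} : ¬ ((Flat.el a : Flat A) ≤ Flat.bot) :=
  fun h => h

theorem Flat.el_le_el {A : Type} {a b : A} (h : (Flat.el a : Flat A) ≤ Flat.el b) :
    a = b := h

/-- The one-vertex, no-edge graph with `⊥` label, used as a test object. -/
def ptG (S : Type) : LGraph (FlatL S) where
  V := Unit
  E := Empty
  src := Empty.elim
  tgt := Empty.elim
  lV _ := Flat.bot
  lE := Empty.elim

/-- The morphism from the test object picking a vertex. -/
def pickHom {S : Type} (G : LGraph (FlatL S)) (v : G.V) : GLHom (ptG S) G where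
  onV _ := v
  onE := Empty.elim
  src_comm e := e.elim
  tgt_comm e := e.elim
  lV_le _ := Flat.bot_le _
  lE_le e := e.elim

theorem pb_onV (ρ : TRSRule S ar X) (s : Term S ar X)
    (m : (ruleEnc ρ).L ⟶ s.enc) (α : s.enc ⟶ (ruleEnc ρ).L')
    (hpb : IsPullback (𝟙 (ruleEnc ρ).L) m (ruleEnc ρ).tL α)
    {u : (ruleEnc ρ).L.V} {v : s.enc.V}
    (h : GLHom.onV (ruleEnc ρ).tL u = GLHom.onV α v) : GLHom.onV m u = v := by
  let f : ptG S ⟶ (ruleEnc ρ).L := pickHom _ u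
  let g : ptG S ⟶ s.enc := pickHom _ v
  have hcomm : f ≫ (ruleEnc ρ).tL = g ≫ α :=
    GLHom.ext' (funext fun _ => h) (funext fun e => e.elim)
  have h1 : hpb.lift f g hcomm = f := by
    have := hpb.lift_fst f g hcomm
    simpa using this
  have h2 : f ≫ m = g := by rw [← h1]; exact hpb.lift_snd f g hcomm
  exact congrFun (congrArg GLHom.onV h2) ()

theorem m_root_inl (ρ : TRSRule S ar X) (s : Term S ar X) (p : List ℕ)
    (m : (ruleEnc ρ).L ⟶ s.enc) (hroot : s.encVertAt p (homV m ρ.lhs.encRoot)) :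
    ∃ hp : (s.symAt p).isSome, homV m ρ.lhs.encRoot = Sum.inl ⟨p, hp⟩ := by
  cases hmv : homV m ρ.lhs.encRoot with
  | inl a =>
    rw [hmv] at hroot
    have hp : a.1 = p := hroot
    cases hp
    exact ⟨a.2, rfl⟩
  | inr x =>
    exfalso
    have hlab := GLHom.lV_le m ρ.lhs.encRoot
    rw [show GLHom.onV m ρ.lhs.encRoot = Sum.inr x from hmv] at hlab
    rw [ρ.encRoot_eq] at hlab
    obtain ⟨f, hf⟩ := Option.isSome_iff_exists.mp ρ.symAt_nil_isSome
    have hL : (ruleEnc ρ).L.lV (Sum.inl ⟨[], ρ.symAt_nil_isSome⟩) = Flat.el (Sum.inl f) := by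
      show (ρ.lhs.symAt []).elim Flat.bot _ = _
      rw [hf]
      rfl
    rw [hL] at hlab
    exact Flat.not_el_le_bot hlab

theorem l'_edge_det (ρ : TRSRule S ar X) (i : ℕ)
    (ae be : (ruleEnc ρ).L'.E)
    (hsrc : (ruleEnc ρ).L'.src ae = (ruleEnc ρ).L'.src be)
    (hla : (Flat.el (Sum.inr ⟨i+1, Nat.succ_pos i⟩) : FlatL S) ≤ (ruleEnc ρ).L'.lE ae)
    (hlb : (Flat.el (Sum.inr ⟨i+1, Nat.succ_pos i⟩) : FlatL S) ≤ (ruleEnc ρ).L'.lE be)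
    (hbool : ∀ b b' : Bool, ae = Sum.inr b → be = Sum.inr b' → b = b') :
    ae = be := by
  rcases ae with (⟨⟨q₀, i₀⟩, h₀⟩ | (⟨_, y, rfl⟩ | ⟨_, y, rfl⟩)) | b <;>
    rcases be with (⟨⟨q₁, i₁⟩, h₁⟩ | (⟨_, y', rfl⟩ | ⟨_, y', rfl⟩)) | b' <;>
    simp only [ruleEnc, ctxCC, upperCC, lowerCC, Term.enc] at hsrc hla hlb ⊢
  · -- A A
    injection hsrc with h1
    injection h1 with h2
    injection h2 with h3
    obtain rfl : q₀ = q₁ := congrArg Subtype.val h3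
    have e1 : (Sum.inr ⟨i+1, Nat.succ_pos i⟩ : S ⊕ ℕ+) = Sum.inr ⟨i₀+1, Nat.succ_pos i₀⟩ :=
      Flat.el_le_el hla
    have e2 : (Sum.inr ⟨i+1, Nat.succ_pos i⟩ : S ⊕ ℕ+) = Sum.inr ⟨i₁+1, Nat.succ_pos i₁⟩ :=
      Flat.el_le_el hlb
    injection e1 with e1
    injection e2 with e2
    have e1' : i + 1 = i₀ + 1 := Subtype.ext_iff.mp e1
    have e2' : i + 1 = i₁ + 1 := Subtype.ext_iff.mp e2
    obtain rfl : i₀ = i₁ := by omega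
    rfl
  · injection hsrc with h1; injection h1 with h1; injection h1
  · simp at hsrc
  · simp at hsrc
  · injection hsrc with h1; injection h1 with h1; injection h1
  · -- B B
    injection hsrc with h1
    injection h1 with h2
    injection h2 with h3
    subst h3
    rfl
  · simp at hsrc
  · simp at hsrc
  · simp at hsrc
  · simp at hsrc
  · -- C C
    injection hsrc with h1
    injection h1 with h2
    have h3 := congrArg Subtype.val h2
    injection h3 with h4
    subst h4
    rfl
  · simp at hsrc
  · simp at hsrc
  · simp at hsrc
  · simp at hsrc
  · -- D D
    rw [hbool b b' rfl rfl]

theorem Term.encTgt_ne_root (t : Term S ar X) (e : t.encE) (h' : (t.symAt []).isSome) :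
    t.encTgt e ≠ Sum.inl ⟨[], h'⟩ := by
  by_cases h : (t.symAt (e.1.1 ++ [e.1.2])).isSome
  · rw [show t.encTgt e = Sum.inl ⟨_, h⟩ from dif_pos h]
    intro hc
    injection hc with hc
    have := congrArg Subtype.val hc
    simp at this
  · rw [show t.encTgt e = Sum.inr ⟨Classical.choose (t.edge_tgt_var e.2 h),
      ⟨e.1.1 ++ [e.1.2], Classical.choose_spec (t.edge_tgt_var e.2 h)⟩⟩ from dif_neg h]
    intro hc
    exact Sum.inr_ne_inl hc

theorem l'_tgt_root (ρ : TRSRule S ar X) (ee : (ruleEnc ρ).L'.E)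
    (h : (ruleEnc ρ).L'.tgt ee = Sum.inl (Sum.inl ρ.lhs.encRoot)) : ee = Sum.inr true := by
  rcases ee with (e₀ | (z | z)) | b
  · exfalso
    have h2 : (Sum.inl (Sum.inl (ρ.lhs.encTgt e₀)) : (ruleEnc ρ).L'.V) =
        Sum.inl (Sum.inl ρ.lhs.encRoot) := h
    rw [ρ.encRoot_eq] at h2
    injection h2 with h2
    injection h2 with h2
    exact ρ.lhs.encTgt_ne_root e₀ ρ.symAt_nil_isSome h2
  · exfalso
    have h2 : (Sum.inl (Sum.inr z) : (ruleEnc ρ).L'.V) = Sum.inl (Sum.inl ρ.lhs.encRoot) := h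
    injection h2 with h2
    exact Sum.inr_ne_inl h2
  · exfalso
    have h2 : (Sum.inl (Sum.inr z) : (ruleEnc ρ).L'.V) = Sum.inl (Sum.inl ρ.lhs.encRoot) := h
    injection h2 with h2
    exact Sum.inr_ne_inl h2
  · cases b
    · exact absurd (show (Sum.inr () : (ruleEnc ρ).L'.V) = Sum.inl (Sum.inl ρ.lhs.encRoot)
        from h) (by simp)
    · rfl

theorem l'_tgt_ctx (ρ : TRSRule S ar X) (ee : (ruleEnc ρ).L'.E)
    (h : (ruleEnc ρ).L'.tgt ee = Sum.inr ()) : ee = Sum.inr false := by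
  rcases ee with (e₀ | (z | z)) | b
  · exact absurd (show (Sum.inl (Sum.inl (ρ.lhs.encTgt e₀)) : (ruleEnc ρ).L'.V) = Sum.inr ()
      from h) (by simp)
  · exact absurd (show (Sum.inl (Sum.inr z) : (ruleEnc ρ).L'.V) = Sum.inr () from h) (by simp)
  · exact absurd (show (Sum.inl (Sum.inr z) : (ruleEnc ρ).L'.V) = Sum.inr () from h) (by simp)
  · cases b
    · rfl
    · exact absurd (show (Sum.inl (Sum.inl ρ.lhs.encRoot) : (ruleEnc ρ).L'.V) = Sum.inr ()
        from h) (by simp)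

theorem alpha_unique (ρ : TRSRule S ar X) (s : Term S ar X)
    (p : List ℕ) (m : (ruleEnc ρ).L ⟶ s.enc)
    (hroot : s.encVertAt p (homV m ρ.lhs.encRoot))
    (α β : s.enc ⟶ (ruleEnc ρ).L')
    (hα1 : m ≫ α = (ruleEnc ρ).tL)
    (hα2 : IsPullback (𝟙 (ruleEnc ρ).L) m (ruleEnc ρ).tL α)
    (hβ1 : m ≫ β = (ruleEnc ρ).tL)
    (hβ2 : IsPullback (𝟙 (ruleEnc ρ).L) m (ruleEnc ρ).tL β) :
    α = β := by
  obtain ⟨hp, hmroot⟩ := m_root_inl ρ s p m hroot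
  have hsubp : (s.sub? p).isSome := Term.symAt_isSome_sub hp
  have hcα : ∀ u, GLHom.onV α (GLHom.onV m u) = GLHom.onV (ruleEnc ρ).tL u :=
    fun u => congrFun (congrArg GLHom.onV hα1) u
  have hcβ : ∀ u, GLHom.onV β (GLHom.onV m u) = GLHom.onV (ruleEnc ρ).tL u :=
    fun u => congrFun (congrArg GLHom.onV hβ1) u
  -- Forcing along the spine above the match position: everything maps to the
  -- context vertex.
  have hctx : ∀ (γ : s.enc ⟶ (ruleEnc ρ).L'), m ≫ γ = (ruleEnc ρ).tL →
      ∀ (rest q : List ℕ), rest ≠ [] → q ++ rest = p → ∀ hq : (s.symAt q).isSome,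
        GLHom.onV γ (Sum.inl ⟨q, hq⟩) = Sum.inr () := by
    intro γ hγ rest
    have hcγ : ∀ u, GLHom.onV γ (GLHom.onV m u) = GLHom.onV (ruleEnc ρ).tL u :=
      fun u => congrFun (congrArg GLHom.onV hγ) u
    induction rest with
    | nil => intro q hne; exact absurd rfl hne
    | cons j rest ih =>
      intro q hne hq h
      have hq' : (q ++ [j]) ++ rest = p := by simpa using hq
      obtain ⟨f, hf, hj⟩ := Term.proper_prefix_sym hsubp hq
      set e : s.encE := ⟨(q, j), f, hf, hj⟩ with hedef
      rcases eq_or_ne rest [] with rfl | hrest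
      · -- q ++ [j] = p : the target is the matched root
        have hqp : q ++ [j] = p := by simpa using hq'
        have h5 : s.encVertAt (q ++ [j]) (s.encTgt e) := s.encVertAt_tgt e
        have hpv : s.encVertAt p (s.encTgt e) := hqp ▸ h5
        have htm : s.enc.tgt e = GLHom.onV m ρ.lhs.encRoot := Term.vertAt_unique hpv hroot
        have h1 : (ruleEnc ρ).L'.tgt (GLHom.onE γ e) = Sum.inl (Sum.inl ρ.lhs.encRoot) := by
          rw [GLHom.tgt_comm γ e, htm, hcγ ρ.lhs.encRoot]
          rfl
        have hge := l'_tgt_root ρ _ h1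
        have h2 : (ruleEnc ρ).L'.src (GLHom.onE γ e) = GLHom.onV γ (Sum.inl ⟨q, h⟩) :=
          GLHom.src_comm γ e
        rw [← h2, hge]
        rfl
      · obtain ⟨j₂, rest₂, rfl⟩ := List.exists_cons_of_ne_nil hrest
        obtain ⟨f₂, hf₂, hj₂⟩ := Term.proper_prefix_sym hsubp hq'
        have h2 : (s.symAt (q ++ [j])).isSome := by rw [hf₂]; rfl
        have hihv := ih (q ++ [j]) (List.cons_ne_nil _ _) hq' h2
        have htv : s.enc.tgt e = Sum.inl ⟨q ++ [j], h2⟩ :=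
          Term.vertAt_unique (s.encVertAt_tgt e) rfl
        have h1 : (ruleEnc ρ).L'.tgt (GLHom.onE γ e) = Sum.inr () := by
          rw [GLHom.tgt_comm γ e, htv, hihv]
        have hge := l'_tgt_ctx ρ _ h1
        have h3 : (ruleEnc ρ).L'.src (GLHom.onE γ e) = GLHom.onV γ (Sum.inl ⟨q, h⟩) :=
          GLHom.src_comm γ e
        rw [← h3, hge]
        rfl
  -- Base case of the main induction: the vertex at the root position.
  have hbase : ∀ v : s.encV, s.posOf v = [] → GLHom.onV α v = GLHom.onV β v := by
    intro v hpos
    have hv0 : s.encVertAt [] v := hpos ▸ s.encVertAt_posOf v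
    by_cases hp0 : p = []
    · subst hp0
      have hvm : v = GLHom.onV m ρ.lhs.encRoot := Term.vertAt_unique hv0 hroot
      rw [hvm]
      exact (hcα _).trans (hcβ _).symm
    · obtain ⟨j, rest, hjr⟩ := List.exists_cons_of_ne_nil hp0
      have hjr' : [] ++ j :: rest = p := by simpa using hjr.symm
      obtain ⟨f, hf, hj⟩ := Term.proper_prefix_sym hsubp hjr'
      have h0 : (s.symAt []).isSome := by rw [hf]; rfl
      have hveq : v = Sum.inl ⟨[], h0⟩ := Term.vertAt_unique hv0 rfl
      rw [hveq, hctx α hα1 (j :: rest) [] (List.cons_ne_nil _ _) hjr' h0,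
          hctx β hβ1 (j :: rest) [] (List.cons_ne_nil _ _) hjr' h0]
  -- Main induction on the length of the position of a vertex.
  have key : ∀ (n : ℕ) (v : s.encV), (s.posOf v).length ≤ n →
      GLHom.onV α v = GLHom.onV β v := by
    intro n
    induction n with
    | zero =>
      intro v hv
      exact hbase v (List.eq_nil_of_length_eq_zero (Nat.le_zero.mp hv))
    | succ n ih =>
      intro v hv
      rcases List.eq_nil_or_concat (s.posOf v) with h0 | ⟨q, i, hqi⟩
      · exact hbase v h0
      rw [List.concat_eq_append] at hqi
      by_cases hr : ∃ u, GLHom.onV m u = v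
      · obtain ⟨u, rfl⟩ := hr
        exact (hcα u).trans (hcβ u).symm
      · have hvAt : s.encVertAt (q ++ [i]) v := hqi ▸ s.encVertAt_posOf v
        by_cases hpre : ∃ rest, rest ≠ [] ∧ (q ++ [i]) ++ rest = p
        · obtain ⟨rest, hne, hqp⟩ := hpre
          obtain ⟨j₂, rest₂, rfl⟩ := List.exists_cons_of_ne_nil hne
          obtain ⟨f₂, hf₂, hj₂⟩ := Term.proper_prefix_sym hsubp hqp
          have h2 : (s.symAt (q ++ [i])).isSome := by rw [hf₂]; rfl
          have hveq : v = Sum.inl ⟨q ++ [i], h2⟩ := Term.vertAt_unique hvAt rfl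
          rw [hveq, hctx α hα1 _ _ (List.cons_ne_nil _ _) hqp h2,
              hctx β hβ1 _ _ (List.cons_ne_nil _ _) hqp h2]
        · -- forcing along the edge from the parent
          obtain ⟨f, hf, hi⟩ := Term.child_ex (Term.vertAt_sub hvAt)
          set e : s.encE := ⟨(q, i), f, hf, hi⟩ with hedef
          have hW : GLHom.onV α (s.enc.src e) = GLHom.onV β (s.enc.src e) := by
            apply ih
            show q.length ≤ n
            have hlen := hv
            rw [hqi] at hlen
            simp at hlen
            omega
          have htv : s.enc.tgt e = v := Term.vertAt_unique (s.encVertAt_tgt e) hvAt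
          have hae : GLHom.onE α e = GLHom.onE β e := by
            apply l'_edge_det ρ i
            · rw [GLHom.src_comm α e, GLHom.src_comm β e, hW]
            · exact GLHom.lE_le α e
            · exact GLHom.lE_le β e
            · intro b b' hb hb'
              cases b with
              | true =>
                exfalso
                have h1 : GLHom.onV α v = Sum.inl (Sum.inl ρ.lhs.encRoot) := by
                  rw [← htv, ← GLHom.tgt_comm α e, hb]
                  rfl
                exact hr ⟨ρ.lhs.encRoot,
                  pb_onV ρ s m α hα2 (u := ρ.lhs.encRoot) (v := v) h1.symm⟩
              | false =>
                cases b' with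
                | true =>
                  exfalso
                  have h1 : GLHom.onV β v = Sum.inl (Sum.inl ρ.lhs.encRoot) := by
                    rw [← htv, ← GLHom.tgt_comm β e, hb']
                    rfl
                  exact hr ⟨ρ.lhs.encRoot,
                    pb_onV ρ s m β hβ2 (u := ρ.lhs.encRoot) (v := v) h1.symm⟩
                | false => rfl
          rw [← htv, ← GLHom.tgt_comm α e, ← GLHom.tgt_comm β e, hae]
  have hV : ∀ v, GLHom.onV α v = GLHom.onV β v := fun v => key (s.posOf v).length v le_rfl
  refine GLHom.ext' (funext hV) (funext fun e => ?_)
  apply l'_edge_det ρ e.1.2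
  · rw [GLHom.src_comm α e, GLHom.src_comm β e, hV]
  · exact GLHom.lE_le α e
  · exact GLHom.lE_le β e
  · intro b b' hb hb'
    have ht : (ruleEnc ρ).L'.tgt (GLHom.onE α e) = (ruleEnc ρ).L'.tgt (GLHom.onE β e) := by
      rw [GLHom.tgt_comm α e, GLHom.tgt_comm β e, hV]
    rw [hb, hb'] at ht
    cases b <;> cases b'
    · rfl
    · exact absurd (show (Sum.inr () : (ruleEnc ρ).L'.V) = Sum.inl (Sum.inl ρ.lhs.encRoot)
        from ht) (by simp)
    · exact absurd (show (Sum.inl (Sum.inl ρ.lhs.encRoot) : (ruleEnc ρ).L'.V) = Sum.inr ()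
        from ht) (by simp)
    · rfl

end Aux

/-- If the rule encoding `ρ°` of a linear term rewrite rule
`ρ = l → r` is applied at position `p` in the term encoding `s°` (the match
morphism `m : l° ↣ s°` maps the root of `l°` to the vertex at position `p` of
`s°` and establishes a match), then there is a unique morphism
`α : s° → C[l°↓]` such that `α ∘ m = t_L` and the square with sides
`m, 1_{l°}, α, t_L` is a pullback. -/
theorem statement_1 {S : Type} {ar : S → ℕ} {X : Type}
    (ρ : TRSRule S ar X) (hρ : ρ.Linear) (s : Term S ar X) (hs : s.Linear)
    (p : List ℕ) (m : (ruleEnc ρ).L ⟶ s.enc)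
    (hroot : s.encVertAt p (homV m ρ.lhs.encRoot))
    (hmatch : EstablishesMatch (ruleEnc ρ) m) :
    ∃! α : s.enc ⟶ (ruleEnc ρ).L',
      m ≫ α = (ruleEnc ρ).tL ∧ IsPullback (𝟙 (ruleEnc ρ).L) m (ruleEnc ρ).tL α := by
  obtain ⟨hm, α₀, h₀c, h₀pb⟩ := hmatch
  refine ⟨α₀, ⟨h₀c, h₀pb⟩, ?_⟩
  intro β hβ
  exact alpha_unique ρ s p m hroot β α₀ hβ.1 hβ.2 h₀c h₀pb
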